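/- Let q1, q2, q3, q4 be four points in the Euclidean plane ℝ² with q2 − q1 = t • (q3 − q4) for some t > 0 and q1, q2, q4 not collinear; let r_ij denote their mutual distances, and suppose positive masses m1, m2, m3, m4 and real numbers λ, σ satisfy the trapezoidal central configuration equations for these distances. Then neither leg is the longest exterior side: max(r14, r23) ≤ max(r12, r34). -/

import Mathlib

lemma aux_anti {x y : ℝ} (hx : 0 < x) (hxy : x < y) :
    y ^ (-3 : ℤ) < x ^ (-3 : ℤ) := by
  have h3 : x ^ 3 < y ^ 3 := pow_lt_pow_left₀ hxy hx.le (by norm_num)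
  have hinv : (y ^ 3)⁻¹ < (x ^ 3)⁻¹ := inv_strictAnti₀ (by positivity) h3
  have e1 : y ^ (-3 : ℤ) = (y ^ 3)⁻¹ := by rw [zpow_neg]; norm_cast
  have e2 : x ^ (-3 : ℤ) = (x ^ 3)⁻¹ := by rw [zpow_neg]; norm_cast
  rw [e1, e2]; exact hinv

lemma aux_lt {x y : ℝ} (hx : 0 < x) (hy : 0 < y)
    (h : x ^ (-3 : ℤ) < y ^ (-3 : ℤ)) : y < x := by
  by_contra hc
  push_neg at hc
  rcases hc.lt_or_eq with h' | h'
  · exact absurd (aux_anti hx h') (by linarith)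
  · rw [h'] at h; exact lt_irrefl _ h

lemma aux_eq {x y : ℝ} (hx : 0 < x) (hy : 0 < y)
    (h : x ^ (-3 : ℤ) = y ^ (-3 : ℤ)) : x = y := by
  rcases lt_trichotomy x y with h' | h' | h'
  · exact absurd (aux_anti hx h') (by rw [h]; exact lt_irrefl _)
  · exact h'
  · exact absurd (aux_anti hy h') (by rw [h]; exact fun hh => lt_irrefl _ hh)

lemma aux_col (q1 q2 q4 : EuclideanSpace ℝ (Fin 2)) (c : ℝ)
    (h : q4 - q1 = c • (q2 - q1)) :
    Collinear ℝ ({q1, q2, q4} : Set (EuclideanSpace ℝ (Fin 2))) := by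
  rw [collinear_iff_of_mem (Set.mem_insert q1 {q2, q4})]
  refine ⟨q2 - q1, fun p hp => ?_⟩
  rcases hp with rfl | rfl | rfl
  · exact ⟨0, by simp⟩
  · exact ⟨1, by simp⟩
  · exact ⟨c, by rw [← h]; simp⟩

lemma aux_pos_of {m x S : ℝ} (hm : 0 < m) (h : m * x = S) (hS : 0 < S) : 0 < x := by
  nlinarith

lemma aux_neg_of {m x S : ℝ} (hm : 0 < m) (h : m * x = S) (hS : S < 0) : x < 0 := by
  nlinarith

lemma aux_zero_of {m x S : ℝ} (hm : 0 < m) (h : m * x = S) (hS : S = 0) : x = 0 := by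
  rw [hS] at h
  exact (mul_eq_zero.mp h).resolve_left hm.ne'

lemma aux_chain {x y z w : ℝ} (h : x * y = z * w) (hz : 0 < z) (hy : 0 < y)
    (hzx : z < x) (hzy : z < y) : x < w ∧ y < w := by
  constructor <;> nlinarith

lemma aux_sigma_neg (EE DD II ss : ℝ) (hDD : 0 < DD) (hss : 0 < ss)
    (h1 : EE + 2 * (ss * II) + ss ^ 2 * DD < EE)
    (h2 : EE - 2 * II + DD < EE) : False := by
  nlinarith [mul_pos hss hDD]

lemma aux_case1 (EE DD II ss : ℝ) (hDD : 0 < DD) (hss : 0 < ss)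
    (s1 : EE + 2 * ((ss - 1) * II) + (ss - 1) ^ 2 * DD < DD)
    (s2 : EE + 2 * ((ss - 1) * II) + (ss - 1) ^ 2 * DD < ss ^ 2 * DD)
    (s3 : DD < EE)
    (s4 : ss ^ 2 * DD < EE)
    (s5 : EE < EE + 2 * (ss * II) + ss ^ 2 * DD)
    (s6 : EE < EE - 2 * II + DD) : False := by
  have P1 : (ss - 1) * (II - DD) < 0 := by nlinarith
  have P2 : (ss - 1) * (II + ss * DD) < 0 := by nlinarith
  rcases lt_trichotomy ss 1 with hs1 | hs1 | hs1
  · have h1 : 0 < II - DD := by nlinarith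
    linarith
  · subst hs1; linarith
  · have h1 : II + ss * DD < 0 := by nlinarith
    have h2 : ss * (II + ss * DD) < 0 := mul_neg_of_pos_of_neg hss h1
    nlinarith [mul_pos (mul_pos hss hss) hDD]

lemma aux_case2 (EE DD II ss : ℝ) (hDD : 0 < DD) (hss : 0 < ss)
    (s1 : EE < DD)
    (s2 : EE < ss ^ 2 * DD)
    (s3 : DD < EE + 2 * ((ss - 1) * II) + (ss - 1) ^ 2 * DD)
    (s4 : ss ^ 2 * DD < EE + 2 * ((ss - 1) * II) + (ss - 1) ^ 2 * DD)
    (s5 : EE + 2 * ((ss - 1) * II) + (ss - 1) ^ 2 * DD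
        < EE + 2 * (ss * II) + ss ^ 2 * DD)
    (s6 : EE + 2 * ((ss - 1) * II) + (ss - 1) ^ 2 * DD
        < EE - 2 * II + DD) : False := by
  have P1 : 0 < (ss - 1) * (II - DD) := by nlinarith
  have P2 : 0 < (ss - 1) * (II + ss * DD) := by nlinarith
  rcases lt_trichotomy ss 1 with hs1 | hs1 | hs1
  · have h1 : II + ss * DD < 0 := by nlinarith
    linarith
  · subst hs1; linarith
  · have h1 : 0 < II - DD := by nlinarith
    have h2 : ss * DD < ss * II := by nlinarith
    nlinarith [mul_pos (mul_pos hss hss) hDD]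

theorem legs_not_longest_exterior_side
    (q1 q2 q3 q4 : EuclideanSpace ℝ (Fin 2)) (t : ℝ)
    (ht : 0 < t) (hpar : q2 - q1 = t • (q3 - q4))
    (hncol : ¬ Collinear ℝ ({q1, q2, q4} : Set (EuclideanSpace ℝ (Fin 2))))
    (m1 m2 m3 m4 lam sig : ℝ)
    (hm1 : 0 < m1) (hm2 : 0 < m2) (hm3 : 0 < m3) (hm4 : 0 < m4)
    (h12 : m1 * m2 * (dist q1 q2 ^ (-3 : ℤ) - lam) = sig * dist q3 q4 ^ 2)
    (h34 : m3 * m4 * (dist q3 q4 ^ (-3 : ℤ) - lam) = sig * dist q1 q2 ^ 2)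
    (h13 : m1 * m3 * (dist q1 q3 ^ (-3 : ℤ) - lam) = -(sig * dist q1 q2 * dist q3 q4))
    (h24 : m2 * m4 * (dist q2 q4 ^ (-3 : ℤ) - lam) = -(sig * dist q1 q2 * dist q3 q4))
    (h14 : m1 * m4 * (dist q1 q4 ^ (-3 : ℤ) - lam) = sig * dist q1 q2 * dist q3 q4)
    (h23 : m2 * m3 * (dist q2 q3 ^ (-3 : ℤ) - lam) = sig * dist q1 q2 * dist q3 q4) :
    max (dist q1 q4) (dist q2 q3) ≤ max (dist q1 q2) (dist q3 q4) := by
  -- geometric setup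
  have hs0 : 0 < t⁻¹ := inv_pos.mpr ht
  have hq34 : q3 - q4 = t⁻¹ • (q2 - q1) := by
    rw [hpar, smul_smul, inv_mul_cancel₀ ht.ne', one_smul]
  have h13v : q3 - q1 = (q4 - q1) + t⁻¹ • (q2 - q1) := by rw [← hq34]; abel
  have h23v : q3 - q2 = (q4 - q1) + (t⁻¹ - 1) • (q2 - q1) := by
    rw [sub_smul, one_smul, ← hq34]; abel
  have h24v : q4 - q2 = (q4 - q1) - (q2 - q1) := by abel
  -- nondegeneracy
  have hd0 : q2 - q1 ≠ 0 := by
    intro h0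
    apply hncol
    have hq : q2 = q1 := sub_eq_zero.mp h0
    rw [hq, Set.insert_idem]
    exact collinear_pair ℝ q1 q4
  have he0 : q4 - q1 ≠ 0 := by
    intro h0
    exact hncol (aux_col q1 q2 q4 0 (by rw [h0, zero_smul]))
  have hDn : 0 < ‖q2 - q1‖ := norm_pos_iff.mpr hd0
  have ha : 0 < dist q1 q2 := dist_pos.mpr fun h => hd0 (by rw [h, sub_self])
  have hb : 0 < dist q3 q4 := by
    rw [dist_eq_norm, hq34, norm_smul, Real.norm_eq_abs, abs_of_pos hs0]
    positivity
  have hr14 : 0 < dist q1 q4 := dist_pos.mpr fun h => he0 (by rw [← h, sub_self])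
  have hr24 : 0 < dist q2 q4 := by
    refine dist_pos.mpr fun h => hncol (aux_col q1 q2 q4 1 ?_)
    rw [one_smul, ← h]
  have hr13 : 0 < dist q1 q3 := by
    refine dist_pos.mpr fun h => hncol (aux_col q1 q2 q4 (-t⁻¹) ?_)
    have h0 : (q4 - q1) + t⁻¹ • (q2 - q1) = 0 := by rw [← h13v, ← h, sub_self]
    rw [neg_smul]
    exact eq_neg_of_add_eq_zero_left h0
  have hr23 : 0 < dist q2 q3 := by
    refine dist_pos.mpr fun h => hncol (aux_col q1 q2 q4 (1 - t⁻¹) ?_)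
    have h0 : (q4 - q1) + (t⁻¹ - 1) • (q2 - q1) = 0 := by rw [← h23v, ← h, sub_self]
    have h2 : (1 - t⁻¹) • (q2 - q1) = -((t⁻¹ - 1) • (q2 - q1)) := by
      rw [← neg_smul]; congr 1; ring
    rw [h2]
    exact eq_neg_of_add_eq_zero_left h0
  -- distance formulas
  have R12 : dist q1 q2 = ‖q2 - q1‖ := by
    rw [dist_eq_norm, ← norm_neg]; congr 1; abel
  have R34 : dist q3 q4 = t⁻¹ * ‖q2 - q1‖ := by
    rw [dist_eq_norm, hq34, norm_smul, Real.norm_eq_abs, abs_of_pos hs0]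
  have R14 : dist q1 q4 = ‖q4 - q1‖ := by
    rw [dist_eq_norm, ← norm_neg]; congr 1; abel
  have R13 : dist q1 q3 ^ 2 = ‖q4 - q1‖ ^ 2
      + 2 * (t⁻¹ * inner ℝ (q4 - q1) (q2 - q1)) + t⁻¹ ^ 2 * ‖q2 - q1‖ ^ 2 := by
    rw [dist_eq_norm, ← norm_neg, neg_sub, h13v, @norm_add_sq_real, real_inner_smul_right,
      norm_smul, Real.norm_eq_abs, abs_of_pos hs0, mul_pow]
  have R23 : dist q2 q3 ^ 2 = ‖q4 - q1‖ ^ 2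
      + 2 * ((t⁻¹ - 1) * inner ℝ (q4 - q1) (q2 - q1)) + (t⁻¹ - 1) ^ 2 * ‖q2 - q1‖ ^ 2 := by
    rw [dist_eq_norm, ← norm_neg, neg_sub, h23v, @norm_add_sq_real, real_inner_smul_right,
      norm_smul, Real.norm_eq_abs, mul_pow, sq_abs]
  have R24 : dist q2 q4 ^ 2 = ‖q4 - q1‖ ^ 2
      - 2 * inner ℝ (q4 - q1) (q2 - q1) + ‖q2 - q1‖ ^ 2 := by
    rw [dist_eq_norm, ← norm_neg, neg_sub, h24v, @norm_sub_sq_real]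
  -- opaque names for the force values
  obtain ⟨F12, hF12⟩ : ∃ x : ℝ, dist q1 q2 ^ (-3 : ℤ) - lam = x := ⟨_, rfl⟩
  obtain ⟨F34, hF34⟩ : ∃ x : ℝ, dist q3 q4 ^ (-3 : ℤ) - lam = x := ⟨_, rfl⟩
  obtain ⟨F13, hF13⟩ : ∃ x : ℝ, dist q1 q3 ^ (-3 : ℤ) - lam = x := ⟨_, rfl⟩
  obtain ⟨F24, hF24⟩ : ∃ x : ℝ, dist q2 q4 ^ (-3 : ℤ) - lam = x := ⟨_, rfl⟩
  obtain ⟨F14, hF14⟩ : ∃ x : ℝ, dist q1 q4 ^ (-3 : ℤ) - lam = x := ⟨_, rfl⟩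
  obtain ⟨F23, hF23⟩ : ∃ x : ℝ, dist q2 q3 ^ (-3 : ℤ) - lam = x := ⟨_, rfl⟩
  rw [hF12] at h12
  rw [hF34] at h34
  rw [hF13] at h13
  rw [hF24] at h24
  rw [hF14] at h14
  rw [hF23] at h23
  have hprod : F12 * F34 = F14 * F23 := by
    have hmm : (0 : ℝ) < m1 * m2 * m3 * m4 := by positivity
    have key : (m1 * m2 * m3 * m4) * (F12 * F34) = (m1 * m2 * m3 * m4) * (F14 * F23) := by
      linear_combination (m3 * m4 * F34) * h12 + (sig * dist q3 q4 ^ 2) * h34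
        - (m2 * m3 * F23) * h14 - (sig * dist q1 q2 * dist q3 q4) * h23
    exact mul_left_cancel₀ hmm.ne' key
  rcases lt_trichotomy sig 0 with hsig | hsig | hsig
  · -- sigma < 0 : impossible
    exfalso
    have hS : sig * dist q1 q2 * dist q3 q4 < 0 :=
      mul_neg_of_neg_of_pos (mul_neg_of_neg_of_pos hsig ha) hb
    have hF13pos : 0 < F13 := aux_pos_of (mul_pos hm1 hm3) h13 (neg_pos.mpr hS)
    have hF24pos : 0 < F24 := aux_pos_of (mul_pos hm2 hm4) h24 (neg_pos.mpr hS)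
    have hF14neg : F14 < 0 := aux_neg_of (mul_pos hm1 hm4) h14 hS
    have d1 : dist q1 q3 < dist q1 q4 := aux_lt hr14 hr13 (by linarith)
    have d2 : dist q2 q4 < dist q1 q4 := aux_lt hr14 hr24 (by linarith)
    have sq1 : dist q1 q3 ^ 2 < dist q1 q4 ^ 2 := pow_lt_pow_left₀ d1 dist_nonneg (by norm_num)
    have sq2 : dist q2 q4 ^ 2 < dist q1 q4 ^ 2 := pow_lt_pow_left₀ d2 dist_nonneg (by norm_num)
    rw [R13, R14] at sq1
    rw [R24, R14] at sq2
    exact aux_sigma_neg _ _ _ _ (by positivity) hs0 sq1 sq2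
  · -- sigma = 0 : all exterior sides equal
    have hF12z : F12 = 0 := aux_zero_of (mul_pos hm1 hm2) h12 (by rw [hsig, zero_mul])
    have hF14z : F14 = 0 := aux_zero_of (mul_pos hm1 hm4) h14 (by rw [hsig]; ring)
    have hF23z : F23 = 0 := aux_zero_of (mul_pos hm2 hm3) h23 (by rw [hsig]; ring)
    have e1 : dist q1 q4 = dist q1 q2 := aux_eq hr14 ha (by linarith)
    have e2 : dist q2 q3 = dist q1 q2 := aux_eq hr23 ha (by linarith)
    rw [e1, e2, max_self]
    exact le_max_left _ _
  · -- sigma > 0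
    by_contra hcon
    push_neg at hcon
    have hS : 0 < sig * dist q1 q2 * dist q3 q4 := mul_pos (mul_pos hsig ha) hb
    have hF12pos : 0 < F12 :=
      aux_pos_of (mul_pos hm1 hm2) h12 (mul_pos hsig (pow_pos hb 2))
    have hF34pos : 0 < F34 :=
      aux_pos_of (mul_pos hm3 hm4) h34 (mul_pos hsig (pow_pos ha 2))
    have hF14pos : 0 < F14 := aux_pos_of (mul_pos hm1 hm4) h14 hS
    have hF23pos : 0 < F23 := aux_pos_of (mul_pos hm2 hm3) h23 hS
    have hF13neg : F13 < 0 := aux_neg_of (mul_pos hm1 hm3) h13 (neg_neg_of_pos hS)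
    have hF24neg : F24 < 0 := aux_neg_of (mul_pos hm2 hm4) h24 (neg_neg_of_pos hS)
    have hD2 : 0 < ‖q2 - q1‖ ^ 2 := by positivity
    rcases le_total (dist q2 q3) (dist q1 q4) with hle | hle
    · -- r14 is the longest leg
      rw [max_eq_left hle] at hcon
      have hl12 : dist q1 q2 < dist q1 q4 := lt_of_le_of_lt (le_max_left _ _) hcon
      have hl34 : dist q3 q4 < dist q1 q4 := lt_of_le_of_lt (le_max_right _ _) hcon
      have hf1 : F14 < F12 := by have := aux_anti ha hl12; linarith
      have hf2 : F14 < F34 := by have := aux_anti hb hl34; linarith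
      obtain ⟨hg1, hg2⟩ := aux_chain hprod hF14pos hF34pos hf1 hf2
      have hl23a : dist q2 q3 < dist q1 q2 := aux_lt ha hr23 (by linarith)
      have hl23b : dist q2 q3 < dist q3 q4 := aux_lt hb hr23 (by linarith)
      have hd13 : dist q1 q4 < dist q1 q3 := aux_lt hr13 hr14 (by linarith)
      have hd24 : dist q1 q4 < dist q2 q4 := aux_lt hr24 hr14 (by linarith)
      have s1 : dist q2 q3 ^ 2 < dist q1 q2 ^ 2 := pow_lt_pow_left₀ hl23a dist_nonneg (by norm_num)
      have s2 : dist q2 q3 ^ 2 < dist q3 q4 ^ 2 := pow_lt_pow_left₀ hl23b dist_nonneg (by norm_num)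
      have s3 : dist q1 q2 ^ 2 < dist q1 q4 ^ 2 := pow_lt_pow_left₀ hl12 dist_nonneg (by norm_num)
      have s4 : dist q3 q4 ^ 2 < dist q1 q4 ^ 2 := pow_lt_pow_left₀ hl34 dist_nonneg (by norm_num)
      have s5 : dist q1 q4 ^ 2 < dist q1 q3 ^ 2 := pow_lt_pow_left₀ hd13 dist_nonneg (by norm_num)
      have s6 : dist q1 q4 ^ 2 < dist q2 q4 ^ 2 := pow_lt_pow_left₀ hd24 dist_nonneg (by norm_num)
      rw [R23, R12] at s1
      rw [R23, R34, mul_pow] at s2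
      rw [R12, R14] at s3
      rw [R34, R14, mul_pow] at s4
      rw [R14, R13] at s5
      rw [R14, R24] at s6
      exact aux_case1 _ _ _ _ hD2 hs0 s1 s2 s3 s4 s5 s6
    · -- r23 is the longest leg
      rw [max_eq_right hle] at hcon
      have hl12 : dist q1 q2 < dist q2 q3 := lt_of_le_of_lt (le_max_left _ _) hcon
      have hl34 : dist q3 q4 < dist q2 q3 := lt_of_le_of_lt (le_max_right _ _) hcon
      have hf1 : F23 < F12 := by have := aux_anti ha hl12; linarith
      have hf2 : F23 < F34 := by have := aux_anti hb hl34; linarith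
      have hprod' : F34 * F12 = F23 * F14 := by
        rw [mul_comm F34 F12, hprod, mul_comm]
      obtain ⟨hg2, hg1⟩ := aux_chain hprod' hF23pos hF12pos hf2 hf1
      have hl14a : dist q1 q4 < dist q1 q2 := aux_lt ha hr14 (by linarith)
      have hl14b : dist q1 q4 < dist q3 q4 := aux_lt hb hr14 (by linarith)
      have hd13 : dist q2 q3 < dist q1 q3 := aux_lt hr13 hr23 (by linarith)
      have hd24 : dist q2 q3 < dist q2 q4 := aux_lt hr24 hr23 (by linarith)
      have s1 : dist q1 q4 ^ 2 < dist q1 q2 ^ 2 := pow_lt_pow_left₀ hl14a dist_nonneg (by norm_num)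
      have s2 : dist q1 q4 ^ 2 < dist q3 q4 ^ 2 := pow_lt_pow_left₀ hl14b dist_nonneg (by norm_num)
      have s3 : dist q1 q2 ^ 2 < dist q2 q3 ^ 2 := pow_lt_pow_left₀ hl12 dist_nonneg (by norm_num)
      have s4 : dist q3 q4 ^ 2 < dist q2 q3 ^ 2 := pow_lt_pow_left₀ hl34 dist_nonneg (by norm_num)
      have s5 : dist q2 q3 ^ 2 < dist q1 q3 ^ 2 := pow_lt_pow_left₀ hd13 dist_nonneg (by norm_num)
      have s6 : dist q2 q3 ^ 2 < dist q2 q4 ^ 2 := pow_lt_pow_left₀ hd24 dist_nonneg (by norm_num)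
      rw [R14, R12] at s1
      rw [R14, R34, mul_pow] at s2
      rw [R12, R23] at s3
      rw [R34, R23, mul_pow] at s4
      rw [R23, R13] at s5
      rw [R23, R24] at s6
      exact aux_case2 _ _ _ _ hD2 hs0 s1 s2 s3 s4 s5 s6
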